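/- The sequence a_n defined by a_0 = 1 and a_n = Σ_{s=1}^{n} Σ_{n_1+...+n_s = n, n_i ≥ 1} a_{n_1 - 1} ··· a_{n_s - 1} for n ≥ 1 satisfies a_n = C_n, the n-th Catalan number. -/

import Mathlib

open Finset Finset.Nat

/-- one term of the composition sum, with catalan weights -/
def g (s n : ℕ) : ℕ :=
  ∑ nc ∈ antidiagonalTuple s n, if (∀ i, 1 ≤ nc i) then ∏ i, catalan (nc i - 1) else 0

lemma sum_antidiagonalTuple_succ {M : Type*} [AddCommMonoid M] (s n : ℕ)
    (f : (Fin (s + 1) → ℕ) → M) :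
    ∑ x ∈ antidiagonalTuple (s + 1) n, f x
      = ∑ p ∈ antidiagonal n, ∑ t ∈ antidiagonalTuple s p.2, f (Fin.cons p.1 t) := by
  rw [Finset.sum_sigma']
  refine Finset.sum_nbij' (fun x => ⟨(x 0, ∑ i, Fin.tail x i), Fin.tail x⟩)
    (fun q => Fin.cons q.1.1 q.2) ?_ ?_ ?_ ?_ ?_
  · intro x hx
    rw [mem_antidiagonalTuple] at hx
    simp only [Finset.mem_sigma, HasAntidiagonal.mem_antidiagonal, mem_antidiagonalTuple]
    constructor
    · rw [← hx, ← Fin.sum_cons (x 0) (Fin.tail x), Fin.cons_self_tail]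
    · trivial
  · intro q hq
    simp only [Finset.mem_sigma, HasAntidiagonal.mem_antidiagonal, mem_antidiagonalTuple] at hq ⊢
    rw [Fin.sum_cons, hq.2, hq.1]
  · intro x _; exact Fin.cons_self_tail x
  · intro q hq
    simp only [Finset.mem_sigma, HasAntidiagonal.mem_antidiagonal, mem_antidiagonalTuple] at hq
    refine Sigma.ext ?_ ?_
    · simp [Fin.cons_zero, Fin.tail_cons, hq.2]
    · simp [Fin.tail_cons]
  · intro x _; rw [Fin.cons_self_tail]

lemma g_succ (s n : ℕ) :
    g (s + 1) n = ∑ p ∈ antidiagonal n,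
      (if 1 ≤ p.1 then catalan (p.1 - 1) * g s p.2 else 0) := by
  rw [g, sum_antidiagonalTuple_succ]
  refine Finset.sum_congr rfl fun p _ => ?_
  rw [g]
  have : ∀ t : Fin s → ℕ,
      (if (∀ i, 1 ≤ (Fin.cons p.1 t : Fin (s+1) → ℕ) i) then ∏ i, catalan ((Fin.cons p.1 t : Fin (s+1) → ℕ) i - 1) else 0)
      = if 1 ≤ p.1 then catalan (p.1 - 1) *
          (if (∀ i, 1 ≤ t i) then ∏ i, catalan (t i - 1) else 0) else 0 := by
    intro t
    by_cases h1 : 1 ≤ p.1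
    · by_cases h2 : ∀ i, 1 ≤ t i
      · rw [if_pos, if_pos h1, if_pos h2, Fin.prod_univ_succ]
        · simp
        · intro i
          refine Fin.cases ?_ ?_ i
          · simpa using h1
          · intro j; simpa using h2 j
      · rw [if_neg, if_pos h1, if_neg h2, mul_zero]
        intro h; exact h2 fun j => by simpa using h j.succ
    · rw [if_neg, if_neg h1]
      intro h; exact h1 (by simpa using h 0)
  simp_rw [this]
  by_cases h1 : 1 ≤ p.1 <;> simp [h1, Finset.mul_sum]

lemma g_eq_zero (s n : ℕ) (h : n < s) : g s n = 0 := by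
  refine Finset.sum_eq_zero fun nc hnc => ?_
  rw [mem_antidiagonalTuple] at hnc
  rw [if_neg]
  intro hall
  have : s ≤ n := by
    calc s = ∑ _i : Fin s, 1 := by simp
    _ ≤ ∑ i, nc i := Finset.sum_le_sum fun i _ => hall i
    _ = n := hnc
  omega

lemma g_zero (n : ℕ) (hn : 1 ≤ n) : g 0 n = 0 := by
  obtain ⟨m, rfl⟩ := Nat.exists_eq_add_of_le hn
  simp [g, antidiagonalTuple_zero_succ (0 + m), Nat.add_comm]

/-- T n = sum over all s of g s n -/
def T (n : ℕ) : ℕ := ∑ s ∈ Finset.range (n + 1), g s n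

lemma T_zero : T 0 = 1 := by
  simp [T, g, antidiagonalTuple_zero_zero]

lemma T_eq_catalan : ∀ n, T n = catalan n := by
  intro n
  induction n using Nat.strong_induction_on with
  | _ n ih =>
    match n with
    | 0 => simpa using T_zero
    | n + 1 =>
      have h1 : T (n + 1) = ∑ s ∈ Finset.range (n + 1), g (s + 1) (n + 1) := by
        rw [T, Finset.sum_range_succ', g_zero (n+1) (by omega), add_zero]
      rw [h1]
      simp_rw [g_succ]
      rw [Finset.sum_comm]
      have h2 : ∀ p ∈ antidiagonal (n + 1),
          (∑ s ∈ Finset.range (n + 1), if 1 ≤ p.1 then catalan (p.1 - 1) * g s p.2 else 0)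
          = if 1 ≤ p.1 then catalan (p.1 - 1) * catalan p.2 else 0 := by
        intro p hp
        rw [HasAntidiagonal.mem_antidiagonal] at hp
        by_cases hq : 1 ≤ p.1
        · simp_rw [if_pos hq]
          rw [← Finset.mul_sum]
          congr 1
          have hp2 : p.2 ≤ n := by omega
          rw [← ih p.2 (by omega), T]
          exact (Finset.sum_subset (Finset.range_subset_range.mpr (by omega))
            (fun s _ hs => g_eq_zero s p.2 (by
              rw [Finset.mem_range, not_lt] at hs; omega))).symm
        · simp [hq]
      rw [Finset.sum_congr rfl h2,
        Finset.Nat.sum_antidiagonal_eq_sum_range_succ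
          (fun x y => if 1 ≤ x then catalan (x - 1) * catalan y else 0),
        Finset.sum_range_succ']
      simp only [Nat.not_lt_zero, if_neg, Nat.le_add_left, if_pos, Nat.add_sub_cancel,
        Nat.lt_irrefl]
      rw [catalan_succ, Fin.sum_univ_eq_sum_range (fun i => catalan i * catalan (n - i))]
      simp

theorem recursion_eq_catalan (a : ℕ → ℕ) (h0 : a 0 = 1)
    (hrec : ∀ n, 1 ≤ n →
      a n = ∑ s ∈ Finset.Icc 1 n, ∑ nc ∈ Finset.Nat.antidiagonalTuple s n,
        if (∀ i, 1 ≤ nc i) then ∏ i, a (nc i - 1) else 0) :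
    ∀ n, a n = catalan n := by
  intro n
  induction n using Nat.strong_induction_on with
  | _ n ih =>
    match n with
    | 0 => simpa using h0
    | n + 1 =>
      rw [hrec (n + 1) (by omega)]
      have key : ∀ s ∈ Finset.Icc 1 (n + 1),
          (∑ nc ∈ antidiagonalTuple s (n + 1),
            if (∀ i, 1 ≤ nc i) then ∏ i, a (nc i - 1) else 0) = g s (n + 1) := by
        intro s _
        refine Finset.sum_congr rfl fun nc hnc => ?_
        rw [mem_antidiagonalTuple] at hnc
        by_cases h : ∀ i, 1 ≤ nc i
        · rw [if_pos h, if_pos h]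
          refine Finset.prod_congr rfl fun i _ => ?_
          refine ih (nc i - 1) ?_
          have : nc i ≤ n + 1 := hnc ▸ Finset.single_le_sum (fun j _ => Nat.zero_le _) (Finset.mem_univ i)
          omega
        · rw [if_neg h, if_neg h]
      rw [Finset.sum_congr rfl key]
      have : ∑ s ∈ Finset.Icc 1 (n + 1), g s (n + 1) = T (n + 1) := by
        rw [T, Finset.range_eq_Ico, Finset.sum_eq_sum_Ico_succ_bot (by omega),
          g_zero (n + 1) (by omega), zero_add]
        congr 1
      rw [this, T_eq_catalan]
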